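/- Let t_V, t_D ≥ 0 and let q_1, …, q_m ∈ [0,1]. Among all orderings of the multiset {q_1, …, q_m}, the expected episode duration T is minimized by the ordering sorted in increasing order of rejection probability: for every permutation σ of {1, …, m}, T(q̄_1, …, q̄_m) ≤ T(q_{σ(1)}, …, q_{σ(m)}), where q̄_1 ≤ q̄_2 ≤ … ≤ q̄_m is the sorted rearrangement. -/

import Mathlib

/-- Expected episode duration: `expDur tV tD [q₁, …, qₘ]` is the expected annotation time of
the strategy `VᵐD` that verifies boxes with rejection probabilities `q₁, …, qₘ` in order
(each verification taking time `tV`) and draws manually (taking time `tD`) if all are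
rejected: `expDur tV tD [] = tD` and `expDur tV tD (q :: qs) = tV + q * expDur tV tD qs`. -/
noncomputable def expDur (tV tD : ℝ) : List ℝ → ℝ
  | [] => tD
  | q :: qs => tV + q * expDur tV tD qs

lemma expDur_nonneg (tV tD : ℝ) (htV : 0 ≤ tV) (htD : 0 ≤ tD) :
    ∀ l : List ℝ, (∀ q ∈ l, 0 ≤ q) → 0 ≤ expDur tV tD l
  | [], _ => htD
  | q :: qs, h => by
    have hq : 0 ≤ q := h q (by simp)
    have := expDur_nonneg tV tD htV htD qs (fun x hx => h x (by simp [hx]))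
    simp only [expDur]
    positivity

lemma expDur_swap (tV tD : ℝ) (htV : 0 ≤ tV) (a b : ℝ) (hab : a ≤ b) (l : List ℝ) :
    expDur tV tD (a :: b :: l) ≤ expDur tV tD (b :: a :: l) := by
  simp only [expDur]
  nlinarith [mul_le_mul_of_nonneg_right hab htV]

lemma expDur_orderedInsert (tV tD : ℝ) (htV : 0 ≤ tV) (htD : 0 ≤ tD) (a : ℝ) :
    ∀ l : List ℝ, (∀ q ∈ l, 0 ≤ q) →
      expDur tV tD (List.orderedInsert (· ≤ ·) a l) ≤ expDur tV tD (a :: l)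
  | [], _ => le_refl _
  | b :: l, h => by
    by_cases hab : a ≤ b
    · simp [List.orderedInsert, hab]
    · simp only [List.orderedInsert, hab, if_false]
      have hb : 0 ≤ b := h b (by simp)
      have ih := expDur_orderedInsert tV tD htV htD a l (fun x hx => h x (by simp [hx]))
      have h1 : expDur tV tD (b :: List.orderedInsert (· ≤ ·) a l)
          ≤ expDur tV tD (b :: a :: l) := by
        simp only [expDur] at ih ⊢
        nlinarith [mul_le_mul_of_nonneg_left ih hb]
      exact h1.trans (expDur_swap tV tD htV b a (le_of_not_ge hab) l)

lemma expDur_insertionSort (tV tD : ℝ) (htV : 0 ≤ tV) (htD : 0 ≤ tD) :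
    ∀ l : List ℝ, (∀ q ∈ l, 0 ≤ q) →
      expDur tV tD (List.insertionSort (· ≤ ·) l) ≤ expDur tV tD l
  | [], _ => le_refl _
  | a :: l, h => by
    have ha : 0 ≤ a := h a (by simp)
    have hl : ∀ q ∈ l, 0 ≤ q := fun x hx => h x (by simp [hx])
    have hperm := List.perm_insertionSort (· ≤ ·) l
    have hsl : ∀ q ∈ List.insertionSort (· ≤ ·) l, 0 ≤ q :=
      fun x hx => hl x (hperm.mem_iff.mp hx)
    have h1 := expDur_orderedInsert tV tD htV htD a _ hsl
    have ih := expDur_insertionSort tV tD htV htD l hl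
    have h2 : expDur tV tD (a :: List.insertionSort (· ≤ ·) l) ≤ expDur tV tD (a :: l) := by
      simp only [expDur]
      have := mul_le_mul_of_nonneg_left ih ha
      linarith
    exact le_trans (by simpa [List.insertionSort] using h1) h2

/-- Among all orderings of a given multiset of rejection probabilities, the expected episode
duration is minimized by the ordering sorted increasingly. -/
theorem expDur_sorted_min (tV tD : ℝ) (htV : 0 ≤ tV) (htD : 0 ≤ tD)
    (L L' : List ℝ) (hL : ∀ q ∈ L, 0 ≤ q ∧ q ≤ 1)
    (hsorted : L.Pairwise (· ≤ ·)) (hperm : L.Perm L') :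
    expDur tV tD L ≤ expDur tV tD L' := by
  have hL' : ∀ q ∈ L', 0 ≤ q := fun q hq => (hL q (hperm.mem_iff.mpr hq)).1
  have hsort := List.pairwise_insertionSort (· ≤ ·) L'
  have hpermS : (List.insertionSort (· ≤ ·) L').Perm L' := List.perm_insertionSort _ _
  have heq : L = List.insertionSort (· ≤ ·) L' :=
    List.Perm.eq_of_pairwise' hsorted hsort (hperm.trans hpermS.symm)
  rw [heq]
  exact expDur_insertionSort tV tD htV htD L' hL'
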